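/- For the sticky-disk-type potential V with V(r)=+∞ for r<1, V(r)=−1 for r∈[1,√2], V(r)=0 for r>√2, the minimal energy over N-point subsets of ℤ² satisfies E^{ℤ²}[V](N) ≤ −4N + C√N for some constant C > 0 and all N ≥ 1. -/

import Mathlib

open Finset

/-- The sticky-disk-type potential: +∞ for r < 1, −1 for r ∈ [1,√2], 0 for r > √2. -/
noncomputable def stickyV (r : ℝ) : EReal :=
  if r < 1 then ⊤ else if r ≤ Real.sqrt 2 then (-1 : EReal) else 0

/-- The embedding of ℤ² into the Euclidean plane. -/
noncomputable def latticePt (z : ℤ × ℤ) : EuclideanSpace ℝ (Fin 2) :=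
  (WithLp.equiv 2 (Fin 2 → ℝ)).symm ![(z.1 : ℝ), (z.2 : ℝ)]

namespace StickyAux

/-- Real-valued version of the interaction between distinct lattice points. -/
noncomputable def e (p q : ℤ × ℤ) : ℝ :=
  if (p.1 - q.1)^2 + (p.2 - q.2)^2 ≤ 2 then -1 else 0

lemma e_nonpos (p q : ℤ × ℤ) : e p q ≤ 0 := by
  unfold e; split <;> norm_num

lemma dist_eq' (p q : ℤ × ℤ) :
    dist (latticePt p) (latticePt q)
      = Real.sqrt (((p.1 - q.1)^2 + (p.2 - q.2)^2 : ℤ) : ℝ) := by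
  rw [EuclideanSpace.dist_eq]
  congr 1
  rw [Fin.sum_univ_two]
  simp [latticePt, Real.dist_eq, sq_abs]
  try push_cast
  try ring

lemma sticky_eq (p q : ℤ × ℤ) (h : p ≠ q) :
    stickyV (dist (latticePt p) (latticePt q)) = ((e p q : ℝ) : EReal) := by
  have hs : 1 ≤ (p.1 - q.1)^2 + (p.2 - q.2)^2 := by
    by_contra hc
    push_neg at hc
    have h1 : (p.1 - q.1)^2 = 0 :=
      le_antisymm (by nlinarith [sq_nonneg (p.2 - q.2)]) (sq_nonneg _)
    have h2 : (p.2 - q.2)^2 = 0 :=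
      le_antisymm (by nlinarith [sq_nonneg (p.1 - q.1)]) (sq_nonneg _)
    exact h (Prod.ext (by have := sq_eq_zero_iff.mp h1; omega)
      (by have := sq_eq_zero_iff.mp h2; omega))
  set s : ℤ := (p.1 - q.1)^2 + (p.2 - q.2)^2 with hsdef
  rw [dist_eq', stickyV, e]
  have h1 : ¬ Real.sqrt (s : ℝ) < 1 := by
    rw [not_lt]
    exact Real.one_le_sqrt.mpr (by exact_mod_cast hs)
  rw [if_neg h1]
  by_cases h2 : s ≤ 2
  · rw [if_pos, if_pos h2]
    · norm_num
    · rw [show (2:ℝ) = ((2:ℤ):ℝ) by norm_num, Real.sqrt_le_sqrt_iff (by norm_num)]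
      exact_mod_cast h2
  · rw [if_neg, if_neg h2]
    · norm_num
    · rw [not_le, show (2:ℝ) = ((2:ℤ):ℝ) by norm_num, Real.sqrt_lt_sqrt_iff (by norm_num)]
      exact_mod_cast not_le.mp h2

lemma coe_sum {α : Type*} (s : Finset α) (f : α → ℝ) :
    ((∑ i ∈ s, f i : ℝ) : EReal) = ∑ i ∈ s, ((f i : ℝ) : EReal) := by
  induction s using Finset.cons_induction with
  | empty => simp
  | cons a s ha ih => rw [Finset.sum_cons, Finset.sum_cons, EReal.coe_add, ih]

/-- The lattice enumeration: `n ↦ (n mod k, n div k)`. -/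
def fk (k n : ℕ) : ℤ × ℤ := (((n % k : ℕ) : ℤ), ((n / k : ℕ) : ℤ))

/-- The first `N` points of the enumeration. -/
def Xk (k N : ℕ) : Finset (ℤ × ℤ) := (Finset.range N).image (fk k)

/-- The eight neighbor directions. -/
def D : Finset (ℤ × ℤ) :=
  {(1,0), (-1,0), (0,1), (0,-1), (1,1), (1,-1), (-1,1), (-1,-1)}

lemma D_card : D.card = 8 := by decide

lemma D_ne_zero : ∀ d ∈ D, d ≠ 0 := by decide

lemma D_abs : ∀ d ∈ D, d.1.natAbs ≤ 1 ∧ d.2.natAbs ≤ 1 := by decide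

lemma e_neighbor (p d : ℤ × ℤ) (hd : d ∈ D) : e p (p + d) = -1 := by
  unfold e
  have h1 : p.1 - (p + d).1 = -d.1 := by rw [Prod.fst_add]; ring
  have h2 : p.2 - (p + d).2 = -d.2 := by rw [Prod.snd_add]; ring
  rw [if_pos (by rw [h1, h2]; fin_cases hd <;> norm_num)]

lemma fk_inj {k : ℕ} (hk : 0 < k) : Function.Injective (fk k) := by
  intro m n h
  simp only [fk, Prod.mk.injEq, Nat.cast_inj] at h
  obtain ⟨h1, h2⟩ := h
  calc m = k * (m / k) + m % k := (Nat.div_add_mod m k).symm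
    _ = k * (n / k) + n % k := by rw [h1, h2]
    _ = n := Nat.div_add_mod n k

lemma mem_Xk {k N : ℕ} (hk : 0 < k) (x y : ℕ) (hx : x < k) (h : x + k * y < N) :
    ((x : ℤ), (y : ℤ)) ∈ Xk k N := by
  refine Finset.mem_image.mpr ⟨x + k * y, Finset.mem_range.mpr h, ?_⟩
  simp only [fk, Prod.mk.injEq]
  constructor
  · rw [Nat.add_mul_mod_self_left, Nat.mod_eq_of_lt hx]
  · rw [Nat.add_mul_div_left _ _ hk, Nat.div_eq_of_lt hx]
    norm_num

lemma good {k N : ℕ} (hk : 0 < k) (n : ℕ) (h1 : n % k ≠ 0)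
    (h2 : n % k + 1 ≠ k) (h3 : k ≤ n) (h4 : n + k + 2 ≤ N) (a b : ℤ)
    (ha : a.natAbs ≤ 1) (hb : b.natAbs ≤ 1) : fk k n + (a, b) ∈ Xk k N := by
  have hqr : k * (n / k) + n % k = n := Nat.div_add_mod n k
  have hrk : n % k < k := Nat.mod_lt n hk
  have hq1 : 1 ≤ n / k := (Nat.one_le_div_iff hk).mpr h3
  have hxnn : (0:ℤ) ≤ ((n % k : ℕ) : ℤ) + a := by omega
  have hynn : (0:ℤ) ≤ ((n / k : ℕ) : ℤ) + b := by omega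
  have hx : (((((n % k : ℕ) : ℤ) + a).toNat : ℕ) : ℤ) = ((n % k : ℕ) : ℤ) + a :=
    Int.toNat_of_nonneg hxnn
  have hy : (((((n / k : ℕ) : ℤ) + b).toNat : ℕ) : ℤ) = ((n / k : ℕ) : ℤ) + b :=
    Int.toNat_of_nonneg hynn
  have hpair : fk k n + (a, b)
      = ((((((n % k : ℕ) : ℤ) + a).toNat : ℕ) : ℤ),
         (((((n / k : ℕ) : ℤ) + b).toNat : ℕ) : ℤ)) := by
    simp only [fk, Prod.mk_add_mk, Prod.mk.injEq]
    exact ⟨hx.symm, hy.symm⟩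
  rw [hpair]
  apply mem_Xk hk
  · omega
  · have hxle : ((((n % k : ℕ) : ℤ) + a).toNat : ℕ) ≤ n % k + 1 := by omega
    have hyle : ((((n / k : ℕ) : ℤ) + b).toNat : ℕ) ≤ n / k + 1 := by omega
    calc ((((n % k : ℕ) : ℤ) + a).toNat : ℕ) + k * (((n / k : ℕ) : ℤ) + b).toNat
        ≤ (n % k + 1) + k * (n / k + 1) := add_le_add hxle (Nat.mul_le_mul_left k hyle)
      _ = (k * (n / k) + n % k) + k + 1 := by ring
      _ = n + k + 1 := by rw [hqr]
      _ < N := by omega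

lemma card_mod_le {k N : ℕ} (r : ℕ) :
    ((Finset.range N).filter (fun n => n % k = r)).card ≤ N / k + 1 := by
  have hcr := Finset.card_range (N / k + 1)
  rw [← hcr]
  apply Finset.card_le_card_of_injOn (fun n => n / k)
  · intro n hn
    simp only [Finset.mem_coe, Finset.mem_filter, Finset.mem_range] at hn ⊢
    exact Nat.lt_succ_of_le (Nat.div_le_div_right hn.1.le)
  · intro m hm n hn h
    simp only [Finset.coe_filter, Set.mem_setOf_eq, Finset.mem_range] at hm hn
    calc m = k * (m / k) + m % k := (Nat.div_add_mod m k).symm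
      _ = k * (n / k) + n % k := by rw [show m / k = n / k from h, hm.2, hn.2]
      _ = n := Nat.div_add_mod n k

end StickyAux

open StickyAux in
/-- There is a constant C > 0 such that for every N ≥ 1 there is an N-point subset of ℤ²
whose sticky-disk energy is at most −4N + C√N; i.e. E^{ℤ²}[V](N) ≤ −4N + C√N. -/
theorem lattice_energy_upper_bound :
    ∃ C : ℝ, 0 < C ∧ ∀ N : ℕ, 1 ≤ N → ∃ X : Finset (ℤ × ℤ), X.card = N ∧
      ((1 / 2 : ℝ) : EReal) *
          ∑ p ∈ X, ∑ q ∈ X.erase p, stickyV (dist (latticePt p) (latticePt q)) ≤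
        ((-4 * (N : ℝ) + C * Real.sqrt N : ℝ) : EReal) := by
  classical
  refine ⟨36, by norm_num, fun N hN => ?_⟩
  set k := N.sqrt + 1 with hkdef
  have hk : 0 < k := Nat.succ_pos _
  set X := Xk k N with hXdef
  refine ⟨X, ?_, ?_⟩
  · rw [hXdef, Xk, Finset.card_image_of_injective _ (fk_inj hk), Finset.card_range]
  -- the "good interior" index set G and "bad boundary" set B
  set P : ℕ → Prop := fun n => n % k = 0 ∨ n % k + 1 = k ∨ n < k ∨ N ≤ n + k + 1 with hP
  set B := (Finset.range N).filter P with hBdef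
  set G := (Finset.range N).filter (fun n => ¬ P n) with hGdef
  have hGB : B.card + G.card = N := by
    rw [hBdef, hGdef, Finset.card_filter_add_card_filter_not, Finset.card_range]
  -- cardinality bound on B
  have hBcard : B.card ≤ 4 * N.sqrt + 5 := by
    have hsub : B ⊆ (((Finset.range N).filter (fun n => n % k = 0)
        ∪ (Finset.range N).filter (fun n => n % k = k - 1))
        ∪ Finset.range k) ∪ Finset.Ico (N - (k+1)) N := by
      intro n hn
      simp only [hBdef, hP, Finset.mem_filter, Finset.mem_range] at hn
      simp only [Finset.mem_union, Finset.mem_filter, Finset.mem_range, Finset.mem_Ico]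
      obtain ⟨hnN, h | h | h | h⟩ := hn
      · exact Or.inl (Or.inl (Or.inl ⟨hnN, h⟩))
      · exact Or.inl (Or.inl (Or.inr ⟨hnN, by omega⟩))
      · exact Or.inl (Or.inr h)
      · exact Or.inr ⟨by omega, hnN⟩
    have h1 := card_mod_le (k := k) (N := N) 0
    have h2 := card_mod_le (k := k) (N := N) (k - 1)
    have h3 : (Finset.range k).card = k := Finset.card_range k
    have h4 : (Finset.Ico (N - (k+1)) N).card ≤ k + 1 := by
      rw [Nat.card_Ico]; omega
    have h5 : N / k ≤ N.sqrt := by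
      have h6 : N / k < k := (Nat.div_lt_iff_lt_mul hk).mpr (by
        calc N < (N.sqrt + 1)^2 := Nat.lt_succ_sqrt' N
          _ = k * k := by rw [hkdef]; ring)
      omega
    have c1 := Finset.card_union_le (((Finset.range N).filter (fun n => n % k = 0)
        ∪ (Finset.range N).filter (fun n => n % k = k - 1)) ∪ Finset.range k)
        (Finset.Ico (N - (k+1)) N)
    have c2 := Finset.card_union_le ((Finset.range N).filter (fun n => n % k = 0)
        ∪ (Finset.range N).filter (fun n => n % k = k - 1)) (Finset.range k)
    have c3 := Finset.card_union_le ((Finset.range N).filter (fun n => n % k = 0))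
        ((Finset.range N).filter (fun n => n % k = k - 1))
    have := Finset.card_le_card hsub
    omega
  -- convert the EReal energy to a real sum
  have hcast : ∑ p ∈ X, ∑ q ∈ X.erase p, stickyV (dist (latticePt p) (latticePt q))
      = ((∑ p ∈ X, ∑ q ∈ X.erase p, e p q : ℝ) : EReal) := by
    rw [StickyAux.coe_sum]
    refine Finset.sum_congr rfl fun p hp => ?_
    rw [StickyAux.coe_sum]
    refine Finset.sum_congr rfl fun q hq => ?_
    exact sticky_eq p q (Ne.symm (Finset.ne_of_mem_erase hq))
  rw [hcast, ← EReal.coe_mul, EReal.coe_le_coe_iff]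
  -- per-point degree bound
  have hdeg : ∀ p ∈ X, ∑ q ∈ X.erase p, e p q
      ≤ -(((D.filter fun d => p + d ∈ X).card : ℕ) : ℝ) := by
    intro p hp
    set T := (D.filter fun d => p + d ∈ X).image (fun d => p + d) with hT
    have hsub : T ⊆ X.erase p := by
      intro q hq
      simp only [hT, Finset.mem_image, Finset.mem_filter] at hq
      obtain ⟨d, ⟨hdD, hdX⟩, rfl⟩ := hq
      refine Finset.mem_erase.mpr ⟨?_, hdX⟩
      intro hc
      exact D_ne_zero d hdD (by rwa [add_eq_left] at hc)
    have h1 : ∑ q ∈ X.erase p, e p q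
        = ∑ q ∈ (X.erase p) \ T, e p q + ∑ q ∈ T, e p q := (Finset.sum_sdiff hsub).symm
    have h2 : ∑ q ∈ (X.erase p) \ T, e p q ≤ 0 :=
      Finset.sum_nonpos fun q _ => e_nonpos p q
    have h3 : ∑ q ∈ T, e p q = -(((D.filter fun d => p + d ∈ X).card : ℕ) : ℝ) := by
      rw [hT, Finset.sum_image (fun x _ y _ h => by exact add_left_cancel h)]
      rw [Finset.sum_congr rfl
        (fun d hd => e_neighbor p d (Finset.mem_of_mem_filter d hd))]
      simp
    linarith
  -- all eight neighbors of good points are present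
  have hfull : ∀ n ∈ G, (D.filter fun d => fk k n + d ∈ X).card = 8 := by
    intro n hn
    simp only [hGdef, hP, Finset.mem_filter, Finset.mem_range] at hn
    push_neg at hn
    obtain ⟨hnN, hn1, hn2, hn3, hn4⟩ := hn
    rw [Finset.filter_true_of_mem, D_card]
    intro d hd
    obtain ⟨ha, hb⟩ := D_abs d hd
    have := good (k := k) (N := N) hk n hn1 hn2 hn3 (by omega) d.1 d.2 ha hb
    rw [hXdef]
    simpa using this
  -- sum over the good subset
  have hGsub : G.image (fk k) ⊆ X := by
    rw [hXdef, Xk]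
    exact Finset.image_subset_image (Finset.filter_subset _ _)
  have hXsum : ∑ p ∈ X, ∑ q ∈ X.erase p, e p q ≤ -8 * (G.card : ℝ) := by
    calc ∑ p ∈ X, ∑ q ∈ X.erase p, e p q
        ≤ ∑ p ∈ X, -(((D.filter fun d => p + d ∈ X).card : ℕ) : ℝ) :=
          Finset.sum_le_sum hdeg
      _ ≤ ∑ p ∈ G.image (fk k), -(((D.filter fun d => p + d ∈ X).card : ℕ) : ℝ) := by
          rw [← Finset.sum_sdiff hGsub]
          have : ∑ p ∈ X \ G.image (fk k),
              -(((D.filter fun d => p + d ∈ X).card : ℕ) : ℝ) ≤ 0 :=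
            Finset.sum_nonpos fun p _ => neg_nonpos.mpr (Nat.cast_nonneg _)
          linarith
      _ = ∑ n ∈ G, -(((D.filter fun d => fk k n + d ∈ X).card : ℕ) : ℝ) :=
          Finset.sum_image (fun x _ y _ h => fk_inj hk h)
      _ = ∑ n ∈ G, (-8 : ℝ) := Finset.sum_congr rfl fun n hn => by rw [hfull n hn]; norm_num
      _ = -8 * (G.card : ℝ) := by rw [Finset.sum_const]; simp [mul_comm]
  -- final numeric estimate
  have hs1 : ((N.sqrt : ℕ) : ℝ) ≤ Real.sqrt N := by
    rw [Real.le_sqrt (by positivity) (by positivity)]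
    exact_mod_cast Nat.sqrt_le' N
  have hs2 : (1 : ℝ) ≤ Real.sqrt N :=
    Real.one_le_sqrt.mpr (by exact_mod_cast hN)
  have hGcard : (N : ℝ) - (B.card : ℝ) ≤ (G.card : ℝ) := by
    have : (B.card : ℝ) + (G.card : ℝ) = N := by exact_mod_cast hGB
    linarith
  have hBr : (B.card : ℝ) ≤ 4 * ((N.sqrt : ℕ) : ℝ) + 5 := by exact_mod_cast hBcard
  nlinarith [hXsum, hGcard, hBr, hs1, hs2]
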